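/- For a unit complex number u ≠ ±1 and real t, as t → -1 one has the limits: (1 + t·u)/(1 - u) → 1, and for a smooth path f_t = exp(x·ξ_1 + O(x^2)) with x = √(t+1) approaching a point where e^β = 1 with β(ξ_1) ≠ 0, the combination e^β(f_t)/(1 + t·e^β(f_t)) + e^{-β}(f_t)/(1 + t·e^{-β}(f_t)) converges to -1 - 2/β(ξ_1)^2. -/

import Mathlib

open Filter Asymptotics

theorem stmt9 (b : ℝ) (hb : b ≠ 0) (w r : ℝ → ℂ)
    (hw : ∀ x, w x = Complex.exp (x * b + r x))
    (hr : r =O[nhds (0 : ℝ)] fun x => (x : ℝ) ^ 2) :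
    (∀ u : ℂ, ‖u‖ = 1 → u ≠ 1 → u ≠ -1 →
      Tendsto (fun t : ℝ => (1 + (t : ℂ) * u) / (1 - u)) (nhds (-1)) (nhds 1)) ∧
    Tendsto (fun x : ℝ =>
        w x / (1 + ((x : ℂ) ^ 2 - 1) * w x) + (w x)⁻¹ / (1 + ((x : ℂ) ^ 2 - 1) * (w x)⁻¹))
      (nhdsWithin (0 : ℝ) {0}ᶜ) (nhds (-1 - 2 / (b : ℂ) ^ 2)) := by
  have hbC : (b : ℂ) ≠ 0 := Complex.ofReal_ne_zero.mpr hb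
  constructor
  · intro u hu h1 h2
    have h1' : (1 : ℂ) - u ≠ 0 := sub_ne_zero.mpr (Ne.symm h1)
    have hc : Continuous fun t : ℝ => (1 + (t : ℂ) * u) / (1 - u) :=
      (continuous_const.add (Complex.continuous_ofReal.mul continuous_const)).div_const _
    have h := hc.tendsto (-1)
    have he : (1 + ((-1 : ℝ) : ℂ) * u) / (1 - u) = 1 := by
      rw [show (1 + ((-1 : ℝ) : ℂ) * u) = 1 - u by push_cast; ring, div_self h1']
    rwa [he] at h
  · set l := nhdsWithin (0 : ℝ) {0}ᶜ with hl
    set h : ℝ → ℂ := fun x => (x : ℂ) * b + r x with hh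
    have hhx0 : ∀ x, h x = (x : ℂ) * b + r x := fun x => rfl
    -- r → 0
    have hrt : Tendsto r (nhds 0) (nhds 0) := by
      apply hr.trans_tendsto
      simpa using ((continuous_pow 2).tendsto (0 : ℝ))
    -- r =o[𝓝 0] (x : ℂ)
    have hrl : r =o[nhds (0 : ℝ)] fun x : ℝ => (x : ℂ) := by
      refine hr.trans_isLittleO ?_
      have h2 : (fun x : ℝ => x ^ 2) =o[nhds (0 : ℝ)] fun x : ℝ => x := by
        simpa using isLittleO_pow_pow (𝕜 := ℝ) (by norm_num : 1 < 2)
      refine h2.trans_isBigO ?_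
      exact isBigO_of_le _ fun x => by simp
    have hrx : Tendsto (fun x : ℝ => r x / (x : ℂ)) l (nhds 0) :=
      (hrl.tendsto_div_nhds_zero).mono_left nhdsWithin_le_nhds
    -- h → 0
    have hht : Tendsto h (nhds 0) (nhds 0) := by
      have h1 : Tendsto (fun x : ℝ => (x : ℂ) * b) (nhds 0) (nhds 0) := by
        exact (show Continuous (fun x : ℝ => (x : ℂ) * b) by fun_prop).tendsto' 0 0 (by simp)
      simpa using h1.add hrt
    -- eventually h x ≠ 0 on l
    obtain ⟨C, hC⟩ := hr.bound
    set C1 : ℝ := max C 1 with hC1def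
    have hC1 : (0 : ℝ) < C1 := lt_of_lt_of_le one_pos (le_max_right _ _)
    have hb' : (0 : ℝ) < |b| := abs_pos.mpr hb
    have hsmall : ∀ᶠ x : ℝ in nhds 0, |x| < |b| / C1 := by
      have := eventually_abs_sub_lt (0 : ℝ) (div_pos hb' hC1)
      simpa using this
    have hhne : ∀ᶠ x in l, h x ≠ 0 := by
      filter_upwards [eventually_nhdsWithin_of_eventually_nhds (hC.and hsmall),
        self_mem_nhdsWithin] with x hx hx0
      obtain ⟨hxr, hxs⟩ := hx
      have hx0' : x ≠ 0 := hx0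
      intro h0
      have hxb : (x : ℂ) * b = - r x := by
        rw [hhx0 x] at h0
        linear_combination h0
      have hn1 : |x| * |b| = ‖(x : ℂ) * (b : ℂ)‖ := by
        rw [norm_mul, Complex.norm_real, Complex.norm_real, Real.norm_eq_abs,
          Real.norm_eq_abs]
      have hn2 : ‖(x : ℂ) * (b : ℂ)‖ = ‖r x‖ := by rw [hxb, norm_neg]
      have hn3 : ‖r x‖ ≤ C1 * x ^ 2 := by
        calc ‖r x‖ ≤ C * ‖x ^ 2‖ := hxr
          _ ≤ C1 * x ^ 2 := by
            rw [Real.norm_eq_abs, abs_of_nonneg (sq_nonneg x)]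
            exact mul_le_mul_of_nonneg_right (le_max_left _ _) (sq_nonneg x)
      have habs : 0 < |x| := abs_pos.mpr hx0'
      have k1 : |x| * C1 < |b| := (lt_div_iff₀ hC1).mp hxs
      have k2 : |x| * |b| ≤ C1 * x ^ 2 := by rw [hn1, hn2]; exact hn3
      nlinarith [sq_abs x]
    -- slope of exp at 0
    have hslope : Tendsto (fun z : ℂ => (Complex.exp z - 1) / z)
        (nhdsWithin (0 : ℂ) {0}ᶜ) (nhds 1) := by
      have h1 := hasDerivAt_iff_tendsto_slope.mp (Complex.hasDerivAt_exp 0)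
      rw [Complex.exp_zero] at h1
      refine h1.congr fun z => ?_
      simp [slope_def_field, Complex.exp_zero]
    have hhl : Tendsto h l (nhdsWithin (0 : ℂ) {0}ᶜ) := by
      rw [tendsto_nhdsWithin_iff]
      exact ⟨hht.mono_left nhdsWithin_le_nhds, hhne⟩
    have hE : Tendsto (fun x => (Complex.exp (h x) - 1) / h x) l (nhds 1) := hslope.comp hhl
    -- h/x → b
    have hhx : Tendsto (fun x : ℝ => h x / x) l (nhds b) := by
      have h1 : Tendsto (fun x : ℝ => (b : ℂ) + r x / x) l (nhds ((b : ℂ) + 0)) :=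
        tendsto_const_nhds.add hrx
      rw [add_zero] at h1
      refine h1.congr' ?_
      filter_upwards [self_mem_nhdsWithin] with x hx0
      have hx : (x : ℂ) ≠ 0 := Complex.ofReal_ne_zero.mpr hx0
      rw [hhx0 x]
      field_simp
    -- q = (w-1)/x → b
    set q : ℝ → ℂ := fun x => (w x - 1) / x with hq
    have hqx0 : ∀ x, q x = (w x - 1) / x := fun x => rfl
    have hqt : Tendsto q l (nhds b) := by
      have h1 := hE.mul hhx
      rw [one_mul] at h1
      refine h1.congr' ?_
      filter_upwards [hhne, self_mem_nhdsWithin] with x hne hx0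
      have hx : (x : ℂ) ≠ 0 := Complex.ofReal_ne_zero.mpr hx0
      rw [hqx0 x, hw x, ← hhx0 x]
      field_simp
    -- w → 1
    have hwt : Tendsto w l (nhds 1) := by
      have h1 : Tendsto (fun x => Complex.exp (h x)) (nhds (0 : ℝ)) (nhds 1) := by
        have := (Complex.continuous_exp.tendsto 0).comp hht
        simpa [Function.comp_def] using this
      exact (h1.mono_left nhdsWithin_le_nhds).congr fun x => by rw [hw x, hhx0 x]
    have hwne : ∀ x, w x ≠ 0 := fun x => by rw [hw x]; exact Complex.exp_ne_zero _
    -- x → 0 (as complex), on l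
    have hxt : Tendsto (fun x : ℝ => (x : ℂ)) l (nhds 0) := by
      have := (Complex.continuous_ofReal.tendsto 0)
      simpa using this.mono_left nhdsWithin_le_nhds
    -- d1 / x → -b
    have hd1 : Tendsto (fun x : ℝ => (1 + ((x : ℂ) ^ 2 - 1) * w x) / x) l (nhds (-(b : ℂ))) := by
      have h1 : Tendsto (fun x : ℝ => -q x + (x : ℂ) * w x) l (nhds (-(b : ℂ) + 0 * 1)) :=
        (hqt.neg).add (hxt.mul hwt)
      rw [show (-(b : ℂ) + 0 * 1) = -(b : ℂ) by ring] at h1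
      refine h1.congr' ?_
      filter_upwards [self_mem_nhdsWithin] with x hx0
      have hx : (x : ℂ) ≠ 0 := Complex.ofReal_ne_zero.mpr hx0
      rw [hqx0 x]
      field_simp
      ring
    have hd1ne : ∀ᶠ x : ℝ in l, (1 + ((x : ℂ) ^ 2 - 1) * w x) ≠ 0 := by
      filter_upwards [hd1.eventually_ne (neg_ne_zero.mpr hbC)] with x h1 h0
      exact h1 (by rw [h0, zero_div])
    -- d2 / x → b
    have hd2 : Tendsto (fun x : ℝ => (1 + ((x : ℂ) ^ 2 - 1) * (w x)⁻¹) / x) l (nhds ((b : ℂ))) := by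
      have h1 : Tendsto (fun x : ℝ => (q x + x) / w x) l (nhds (((b : ℂ) + 0) / 1)) :=
        (hqt.add hxt).div hwt one_ne_zero
      rw [show (((b : ℂ) + 0) / 1) = (b : ℂ) by ring] at h1
      refine h1.congr' ?_
      filter_upwards [self_mem_nhdsWithin] with x hx0
      have hx : (x : ℂ) ≠ 0 := Complex.ofReal_ne_zero.mpr hx0
      rw [hqx0 x]
      field_simp [hwne x]
      ring
    have hd2ne : ∀ᶠ x : ℝ in l, (1 + ((x : ℂ) ^ 2 - 1) * (w x)⁻¹) ≠ 0 := by
      filter_upwards [hd2.eventually_ne hbC] with x h1 h0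
      exact h1 (by rw [h0, zero_div])
    -- N → -b²
    have hN : Tendsto (fun x : ℝ => q x ^ 2 * ((x : ℂ) ^ 2 - 1) + (x : ℂ) ^ 2 * w x) l
        (nhds ((b : ℂ) ^ 2 * ((0 : ℂ) ^ 2 - 1) + (0 : ℂ) ^ 2 * 1)) :=
      ((hqt.pow 2).mul ((hxt.pow 2).sub tendsto_const_nhds)).add ((hxt.pow 2).mul hwt)
    rw [show ((b : ℂ) ^ 2 * ((0 : ℂ) ^ 2 - 1) + (0 : ℂ) ^ 2 * 1) = -(b : ℂ) ^ 2 by ring] at hN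
    have hNne : ∀ᶠ x in l, q x ^ 2 * ((x : ℂ) ^ 2 - 1) + (x : ℂ) ^ 2 * w x ≠ 0 :=
      hN.eventually_ne (neg_ne_zero.mpr (pow_ne_zero 2 hbC))
    -- final combination
    have hfinal : Tendsto (fun x : ℝ =>
        (q x ^ 2 + 2 * w x) / (q x ^ 2 * ((x : ℂ) ^ 2 - 1) + (x : ℂ) ^ 2 * w x)) l
        (nhds (((b : ℂ) ^ 2 + 2 * 1) / (-(b : ℂ) ^ 2))) :=
      ((hqt.pow 2).add (tendsto_const_nhds.mul hwt)).div hN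
        (neg_ne_zero.mpr (pow_ne_zero 2 hbC))
    rw [show (((b : ℂ) ^ 2 + 2 * 1) / (-(b : ℂ) ^ 2)) = -1 - 2 / (b : ℂ) ^ 2 by
      field_simp; ring] at hfinal
    refine hfinal.congr' ?_
    filter_upwards [hd1ne, hd2ne, hNne, self_mem_nhdsWithin] with x h1 h2 h3 hx0
    have hx : (x : ℂ) ≠ 0 := Complex.ofReal_ne_zero.mpr hx0
    have hwx := hwne x
    rw [div_add_div _ _ h1 h2, div_eq_div_iff h3 (mul_ne_zero h1 h2)]
    rw [hqx0 x]
    field_simp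
    ring
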